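/- Let r : ℝ → ℝ be continuously differentiable, let A : ℝ → ℝ³ be smooth with A'''(t) + r(t) A(t) = 0 and det(A, A', A'')(t) ≠ 0 for all t, and let x, y : ℝ → ℝ be smooth with y(t) ≠ 0 for all t. Set B := x A + y A'. Then B(t) × B'''(t) = 0 for all t if and only if there is a constant C ∈ ℝ such that x + y' ≡ C and y y⁽⁴⁾ + 2 y'''(y' − C) + 3 r y' y + r' y² ≡ 0. -/

import Mathlib

open Matrix

/-- Scalar triple product on ℝ³. -/
def det3 (u v w : Fin 3 → ℝ) : ℝ := u ⬝ᵥ (v ⨯₃ w)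

private lemma cross_decomp' (u v w : Fin 3 → ℝ) (p q c0 c1 c2 : ℝ) :
    (p • u + q • v) ⨯₃ (c0 • u + c1 • v + c2 • w) =
      (p * c1 - q * c0) • (u ⨯₃ v) + (p * c2) • (u ⨯₃ w) + (q * c2) • (v ⨯₃ w) := by
  ext i
  fin_cases i <;>
    simp [cross_apply, Pi.add_apply, Pi.smul_apply, smul_eq_mul] <;> ring

private lemma dot_w' (u v w : Fin 3 → ℝ) (a b c : ℝ) :
    (a • (u ⨯₃ v) + b • (u ⨯₃ w) + c • (v ⨯₃ w)) ⬝ᵥ w = a * det3 u v w := by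
  simp [det3, cross_apply, dotProduct, Fin.sum_univ_three]; ring

private lemma dot_u' (u v w : Fin 3 → ℝ) (a b c : ℝ) :
    (a • (u ⨯₃ v) + b • (u ⨯₃ w) + c • (v ⨯₃ w)) ⬝ᵥ u = c * det3 u v w := by
  simp [det3, cross_apply, dotProduct, Fin.sum_univ_three]; ring

/-- The projective-involute / dancing-mate equation: with `A''' + rA = 0` in
Laguerre–Forsyth form and `B = xA + yA'`, one has `B × B''' ≡ 0` iff there is a
constant `C` with `x + y' ≡ C` and
`y y⁽⁴⁾ + 2y'''(y' − C) + 3 r y' y + r' y² ≡ 0`. -/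
theorem projective_involute_equation (r : ℝ → ℝ) (hr : ContDiff ℝ 1 r)
    (A : ℝ → Fin 3 → ℝ) (hA : ContDiff ℝ (⊤ : ℕ∞) A)
    (hode : ∀ t, deriv (deriv (deriv A)) t + r t • A t = 0)
    (hnd : ∀ t, det3 (A t) (deriv A t) (deriv (deriv A) t) ≠ 0)
    (x y : ℝ → ℝ) (hx : ContDiff ℝ (⊤ : ℕ∞) x) (hy : ContDiff ℝ (⊤ : ℕ∞) y)
    (hy0 : ∀ t, y t ≠ 0) :
    (∀ t, (x t • A t + y t • deriv A t) ⨯₃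
        deriv (deriv (deriv (fun s => x s • A s + y s • deriv A s))) t = 0)
    ↔ ∃ C : ℝ, (∀ t, x t + deriv y t = C) ∧
        ∀ t, y t * deriv (deriv (deriv (deriv y))) t
            + 2 * deriv (deriv (deriv y)) t * (deriv y t - C)
            + 3 * r t * deriv y t * y t
            + deriv r t * (y t) ^ 2 = 0 := by
  have h1 : ((⊤ : ℕ∞) : WithTop ℕ∞) ≠ 0 := by
    simp
  have dr : Differentiable ℝ r := hr.differentiable one_ne_zero
  have dx : Differentiable ℝ x := hx.differentiable h1
  have hx1 : ContDiff ℝ ((⊤ : ℕ∞) : WithTop ℕ∞) (deriv x) := (contDiff_infty_iff_deriv.mp hx).2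
  have dx1 : Differentiable ℝ (deriv x) := hx1.differentiable h1
  have hx2 : ContDiff ℝ ((⊤ : ℕ∞) : WithTop ℕ∞) (deriv (deriv x)) :=
    (contDiff_infty_iff_deriv.mp hx1).2
  have dx2 : Differentiable ℝ (deriv (deriv x)) := hx2.differentiable h1
  have dy : Differentiable ℝ y := hy.differentiable h1
  have hy1 : ContDiff ℝ ((⊤ : ℕ∞) : WithTop ℕ∞) (deriv y) := (contDiff_infty_iff_deriv.mp hy).2
  have dy1 : Differentiable ℝ (deriv y) := hy1.differentiable h1
  have hy2 : ContDiff ℝ ((⊤ : ℕ∞) : WithTop ℕ∞) (deriv (deriv y)) :=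
    (contDiff_infty_iff_deriv.mp hy1).2
  have dy2 : Differentiable ℝ (deriv (deriv y)) := hy2.differentiable h1
  have hy3 : ContDiff ℝ ((⊤ : ℕ∞) : WithTop ℕ∞) (deriv (deriv (deriv y))) :=
    (contDiff_infty_iff_deriv.mp hy2).2
  have dy3 : Differentiable ℝ (deriv (deriv (deriv y))) := hy3.differentiable h1
  have dA : Differentiable ℝ A := hA.differentiable h1
  have hA1 : ContDiff ℝ ((⊤ : ℕ∞) : WithTop ℕ∞) (deriv A) := (contDiff_infty_iff_deriv.mp hA).2
  have dA1 : Differentiable ℝ (deriv A) := hA1.differentiable h1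
  have hA2 : ContDiff ℝ ((⊤ : ℕ∞) : WithTop ℕ∞) (deriv (deriv A)) :=
    (contDiff_infty_iff_deriv.mp hA1).2
  have dA2 : Differentiable ℝ (deriv (deriv A)) := hA2.differentiable h1
  have hdA2 : ∀ t, HasDerivAt (deriv (deriv A)) (-(r t • A t)) t := by
    intro t
    have h := (dA2 t).hasDerivAt
    rwa [show deriv (deriv (deriv A)) t = -(r t • A t) from
      eq_neg_of_add_eq_zero_left (hode t)] at h
  -- abbreviations
  set A1 : ℝ → Fin 3 → ℝ := deriv A with hA1d
  set A2 : ℝ → Fin 3 → ℝ := deriv A1 with hA2d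
  set x1 : ℝ → ℝ := deriv x with hx1d
  set x2 : ℝ → ℝ := deriv x1 with hx2d
  set x3 : ℝ → ℝ := deriv x2 with hx3d
  set y1 : ℝ → ℝ := deriv y with hy1d
  set y2 : ℝ → ℝ := deriv y1 with hy2d
  set y3 : ℝ → ℝ := deriv y2 with hy3d
  set y4 : ℝ → ℝ := deriv y3 with hy4d
  set r1 : ℝ → ℝ := deriv r with hr1d
  -- first derivative of B
  have hB1 : deriv (fun s => x s • A s + y s • A1 s)
      = fun t => x1 t • A t + (x t + y1 t) • A1 t + y t • A2 t := by
    funext t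
    have h : HasDerivAt (fun s => x s • A s + y s • A1 s)
        (x1 t • A t + (x t + y1 t) • A1 t + y t • A2 t) t := by
      have h1 := ((dx t).hasDerivAt.fun_smul (dA t).hasDerivAt).fun_add
        ((dy t).hasDerivAt.fun_smul (dA1 t).hasDerivAt)
      exact h1.congr_deriv (by module)
    exact h.deriv
  have hB2 : deriv (fun t => x1 t • A t + (x t + y1 t) • A1 t + y t • A2 t)
      = fun t => (x2 t - r t * y t) • A t + (2 * x1 t + y2 t) • A1 t
          + (x t + 2 * y1 t) • A2 t := by
    funext t
    have h : HasDerivAt (fun t => x1 t • A t + (x t + y1 t) • A1 t + y t • A2 t)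
        ((x2 t - r t * y t) • A t + (2 * x1 t + y2 t) • A1 t + (x t + 2 * y1 t) • A2 t) t := by
      have h1 := (((dx1 t).hasDerivAt.fun_smul (dA t).hasDerivAt).fun_add
        (((dx t).hasDerivAt.fun_add (dy1 t).hasDerivAt).fun_smul (dA1 t).hasDerivAt)).fun_add
        ((dy t).hasDerivAt.fun_smul (hdA2 t))
      exact h1.congr_deriv (by module)
    exact h.deriv
  have hB3 : deriv (fun t => (x2 t - r t * y t) • A t + (2 * x1 t + y2 t) • A1 t
        + (x t + 2 * y1 t) • A2 t)
      = fun t => (x3 t - r1 t * y t - 3 * (r t * y1 t) - r t * x t) • A t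
          + (3 * x2 t + y3 t - r t * y t) • A1 t + (3 * x1 t + 3 * y2 t) • A2 t := by
    funext t
    have h : HasDerivAt (fun t => (x2 t - r t * y t) • A t + (2 * x1 t + y2 t) • A1 t
          + (x t + 2 * y1 t) • A2 t)
        ((x3 t - r1 t * y t - 3 * (r t * y1 t) - r t * x t) • A t
          + (3 * x2 t + y3 t - r t * y t) • A1 t + (3 * x1 t + 3 * y2 t) • A2 t) t := by
      have hc1 : HasDerivAt (fun t => x2 t - r t * y t)
          (x3 t - (r1 t * y t + r t * y1 t)) t := by
        have := (dx2 t).hasDerivAt.fun_sub ((dr t).hasDerivAt.fun_mul (dy t).hasDerivAt)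
        convert this using 1
        try ring
      have hc2 : HasDerivAt (fun t => 2 * x1 t + y2 t) (2 * x2 t + y3 t) t := by
        have := ((dx1 t).hasDerivAt.const_mul 2).fun_add (dy2 t).hasDerivAt
        convert this using 1
        try ring
      have hc3 : HasDerivAt (fun t => x t + 2 * y1 t) (x1 t + 2 * y2 t) t := by
        have := (dx t).hasDerivAt.fun_add ((dy1 t).hasDerivAt.const_mul 2)
        convert this using 1
        try ring
      have h1 := ((hc1.fun_smul (dA t).hasDerivAt).fun_add (hc2.fun_smul (dA1 t).hasDerivAt)).fun_add
        (hc3.fun_smul (hdA2 t))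
      exact h1.congr_deriv (by module)
    exact h.deriv
  -- cross product decomposition
  have hcross : ∀ t, (x t • A t + y t • A1 t) ⨯₃
        deriv (deriv (deriv (fun s => x s • A s + y s • A1 s))) t
      = (x t * (3 * x2 t + y3 t - r t * y t)
            - y t * (x3 t - r1 t * y t - 3 * (r t * y1 t) - r t * x t)) • (A t ⨯₃ A1 t)
        + (x t * (3 * x1 t + 3 * y2 t)) • (A t ⨯₃ A2 t)
        + (y t * (3 * x1 t + 3 * y2 t)) • (A1 t ⨯₃ A2 t) := by
    intro t
    rw [hB1, hB2, hB3]
    exact cross_decomp' (A t) (A1 t) (A2 t) _ _ _ _ _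
  rw [show (fun s => x s • A s + y s • deriv A s) = (fun s => x s • A s + y s • A1 s) from rfl]
  constructor
  · intro h
    -- extract scalar equations
    have key : ∀ t, (x t * (3 * x2 t + y3 t - r t * y t)
          - y t * (x3 t - r1 t * y t - 3 * (r t * y1 t) - r t * x t)) = 0
        ∧ x1 t + y2 t = 0 := by
      intro t
      have h0 := (hcross t).symm.trans (h t)
      have hw : (x t * (3 * x2 t + y3 t - r t * y t)
          - y t * (x3 t - r1 t * y t - 3 * (r t * y1 t) - r t * x t)) * det3 (A t) (A1 t) (A2 t)
          = 0 := by
        rw [← dot_w' (A t) (A1 t) (A2 t), h0, zero_dotProduct]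
      have hu : (y t * (3 * x1 t + 3 * y2 t)) * det3 (A t) (A1 t) (A2 t) = 0 := by
        rw [← dot_u' (A t) (A1 t) (A2 t), h0, zero_dotProduct]
      have e1 := (mul_eq_zero.mp hw).resolve_right (hnd t)
      have e2 := (mul_eq_zero.mp hu).resolve_right (hnd t)
      have e3 := (mul_eq_zero.mp e2).resolve_left (hy0 t)
      exact ⟨e1, by linarith⟩
    -- x + y' is constant
    have hconst : ∀ s t : ℝ, x s + y1 s = x t + y1 t := by
      have hdiff : Differentiable ℝ (fun t => x t + y1 t) := dx.add dy1
      have hzero : ∀ t, deriv (fun t => x t + y1 t) t = 0 := by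
        intro t
        rw [deriv_fun_add (dx t) (dy1 t)]
        exact (key t).2
      exact fun s t => is_const_of_deriv_eq_zero hdiff hzero s t
    refine ⟨x 0 + y1 0, fun t => hconst t 0, ?_⟩
    intro t
    -- derivative substitutions
    have hxf : x = fun t => (x 0 + y1 0) - y1 t := by
      funext s; have := hconst s 0; linarith
    have hx1e : ∀ s, x1 s = -y2 s := by
      intro s
      rw [hx1d, hxf, deriv_const_sub]
    have hx2e : ∀ s, x2 s = -y3 s := by
      intro s
      rw [hx2d, show x1 = fun s => -y2 s from funext hx1e, deriv.fun_neg]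
    have hx3e : ∀ s, x3 s = -y4 s := by
      intro s
      rw [hx3d, show x2 = fun s => -y3 s from funext hx2e, deriv.fun_neg]
    have ha := (key t).1
    rw [hx2e, hx3e, hxf] at ha
    simp only at ha
    linear_combination ha
  · rintro ⟨C, hC, hODE⟩ t
    have hxf : x = fun t => C - y1 t := by
      funext s; have := hC s; linarith
    have hx1e : ∀ s, x1 s = -y2 s := by
      intro s
      rw [hx1d, hxf, deriv_const_sub]
    have hx2e : ∀ s, x2 s = -y3 s := by
      intro s
      rw [hx2d, show x1 = fun s => -y2 s from funext hx1e, deriv.fun_neg]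
    have hx3e : ∀ s, x3 s = -y4 s := by
      intro s
      rw [hx3d, show x2 = fun s => -y3 s from funext hx2e, deriv.fun_neg]
    rw [hcross t]
    have e1 : x t * (3 * x2 t + y3 t - r t * y t)
        - y t * (x3 t - r1 t * y t - 3 * (r t * y1 t) - r t * x t) = 0 := by
      have hx' : x t = C - y1 t := by rw [hxf]
      rw [hx2e, hx3e, hx']
      linear_combination hODE t
    have e2 : 3 * x1 t + 3 * y2 t = 0 := by
      rw [hx1e]; ring
    rw [e1, e2]
    simp
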